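/- Let i, j ∈ M(α₁,α₂) be cyclically irreducible of length N and λ, μ ∈ ℂ. Then P^i(u-λ) = P^j(u-μ) (as pairs of polynomials) if and only if there exists k ∈ {0,…,N-1} such that j = k·i and μ = λ + α_{i₁} + ⋯ + α_{i_k}. -/

import Mathlib

open Polynomial

def wsum (α₁ α₂ : ℂ) (l : List Bool) : ℂ :=
  (l.map (fun b => if b then α₂ else α₁)).sum

noncomputable def Pfun (α₁ α₂ : ℂ) (mb : Bool) (l : List Bool) : Polynomial ℂ :=
  ∏ k ∈ Finset.range l.length,
    if l.getD k false = mb then 1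
    else (Polynomial.X - Polynomial.C (wsum α₁ α₂ (l.take (k + 1))))

def CycRed (α₁ α₂ : ℂ) (l : List Bool) : Prop :=
  ∃ (k : ℕ) (a b : List Bool), a ≠ [] ∧ b ≠ [] ∧
    wsum α₁ α₂ a = 0 ∧ wsum α₁ α₂ b = 0 ∧ l.rotate k = a ++ b

namespace Stmt16Aux

def al (α₁ α₂ : ℂ) (b : Bool) : ℂ := if b then α₂ else α₁

variable (α₁ α₂ : ℂ)

lemma wsum_nil : wsum α₁ α₂ [] = 0 := by simp [wsum]

lemma wsum_cons (b : Bool) (t : List Bool) :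
    wsum α₁ α₂ (b :: t) = al α₁ α₂ b + wsum α₁ α₂ t := by simp [wsum, al]

lemma wsum_append (a b : List Bool) :
    wsum α₁ α₂ (a ++ b) = wsum α₁ α₂ a + wsum α₁ α₂ b := by simp [wsum]

lemma wsum_rotate (l : List Bool) (k : ℕ) : wsum α₁ α₂ (l.rotate k) = wsum α₁ α₂ l :=
  List.Perm.sum_eq (List.Perm.map _ (List.rotate_perm l k))

lemma wsum_take_succ (l : List Bool) (k : ℕ) (hk : k < l.length) :
    wsum α₁ α₂ (l.take (k+1)) = wsum α₁ α₂ (l.take k) + al α₁ α₂ (l.getD k false) := by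
  rw [List.take_succ, wsum_append]
  congr 1
  rw [List.getElem?_eq_getElem hk, List.getD_eq_getElem l false hk]
  simp [wsum, al]

def Tl (c : ℂ) : List Bool → List (ℂ × Bool)
  | [] => []
  | b :: t => (c + al α₁ α₂ b, b) :: Tl (c + al α₁ α₂ b) t

lemma Tl_append (a b : List Bool) (c : ℂ) :
    Tl α₁ α₂ c (a ++ b) = Tl α₁ α₂ c a ++ Tl α₁ α₂ (c + wsum α₁ α₂ a) b := by
  induction a generalizing c with
  | nil => simp [Tl, wsum_nil]
  | cons x t ih => simp [Tl, ih, wsum_cons, add_assoc]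

lemma Tl_eq_map (l : List Bool) (c : ℂ) :
    Tl α₁ α₂ c l = (List.range l.length).map
      (fun k => (c + wsum α₁ α₂ (l.take (k+1)), l.getD k false)) := by
  induction l generalizing c with
  | nil => simp [Tl]
  | cons x t ih =>
      rw [List.length_cons, List.range_succ_eq_map, List.map_cons, List.map_map]
      rw [Tl, ih]
      congr 1
      · simp [wsum_cons, wsum_nil]
      · apply List.map_congr_left
        intro k _
        simp [Function.comp, wsum_cons, add_assoc]

def Tm (c : ℂ) (l : List Bool) : Multiset (ℂ × Bool) := (Tl α₁ α₂ c l : Multiset (ℂ × Bool))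

def Rm (c : ℂ) (b : Bool) (l : List Bool) : Multiset ℂ :=
  ((Tm α₁ α₂ c l).filter (fun p => p.2 = b)).map Prod.fst

lemma comp_linear (a c : ℂ) : ((X : ℂ[X]) - C a).comp (X - C c) = X - C (c + a) := by
  simp [sub_comp, map_add]
  ring

lemma prod_if_eq_filter (s : Multiset (ℂ × Bool)) (m : Bool) :
    (s.map (fun p => if p.2 = m then (1:ℂ[X]) else X - C p.1)).prod
      = (((s.filter (fun p => p.2 = !m)).map Prod.fst).map (fun v => X - C v)).prod := by
  induction s using Multiset.induction with
  | empty => simp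
  | cons p s ih =>
      by_cases h : p.2 = m
      · have h2 : ¬ (p.2 = !m) := by cases m <;> simp_all
        simp [h, h2, Multiset.filter_cons, ih]
      · have h2 : p.2 = !m := by cases m <;> simp_all
        simp [h, h2, Multiset.filter_cons, ih]

lemma Pfun_comp (m : Bool) (l : List Bool) (c : ℂ) :
    (Pfun α₁ α₂ m l).comp (X - C c)
      = ((Rm α₁ α₂ c (!m) l).map (fun v => X - C v)).prod := by
  rw [Rm, ← prod_if_eq_filter, Tm, Tl_eq_map]
  rw [Pfun, prod_comp]
  rw [Finset.prod_eq_multiset_prod, Finset.range_val]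
  rw [← Multiset.map_coe, Multiset.map_map, ← Multiset.coe_range]
  congr 1
  apply Multiset.map_congr rfl
  intro k _
  simp only [Function.comp]
  by_cases h : l.getD k false = m
  · rw [if_pos h, if_pos h, one_comp]
  · rw [if_neg h, if_neg h, comp_linear, map_add]

lemma multiset_of_prod_eq (s t : Multiset ℂ)
    (h : (s.map (fun v => X - C v)).prod = (t.map (fun v => X - C v)).prod) : s = t := by
  have := congrArg Polynomial.roots h
  rwa [roots_multiset_prod_X_sub_C, roots_multiset_prod_X_sub_C] at this

lemma filter_pair (s : Multiset (ℂ × Bool)) (b : Bool) :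
    s.filter (fun p => p.2 = b)
      = ((s.filter (fun p => p.2 = b)).map Prod.fst).map (fun v => (v, b)) := by
  rw [Multiset.map_map]
  conv_lhs => rw [← Multiset.map_id (s.filter (fun p => p.2 = b))]
  apply Multiset.map_congr rfl
  intro p hp
  have h := Multiset.of_mem_filter hp
  simp only [id, Function.comp]
  exact Prod.ext rfl h

lemma Tm_eq_of_Rm (c c' : ℂ) (l l' : List Bool)
    (h1 : Rm α₁ α₂ c true l = Rm α₁ α₂ c' true l')
    (h2 : Rm α₁ α₂ c false l = Rm α₁ α₂ c' false l') :
    Tm α₁ α₂ c l = Tm α₁ α₂ c' l' := by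
  have key : ∀ (s : Multiset (ℂ × Bool)),
      s = s.filter (fun p => p.2 = true) + s.filter (fun p => p.2 = false) := by
    intro s
    have e : s.filter (fun p => ¬ (p.2 = true)) = s.filter (fun p => p.2 = false) :=
      Multiset.filter_congr (fun p _ => by cases p.2 <;> simp)
    rw [← e, Multiset.filter_add_not]
  rw [key (Tm α₁ α₂ c l), key (Tm α₁ α₂ c' l')]
  rw [filter_pair (Tm α₁ α₂ c l) true, filter_pair (Tm α₁ α₂ c l) false,
      filter_pair (Tm α₁ α₂ c' l') true, filter_pair (Tm α₁ α₂ c' l') false]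
  rw [show ((Tm α₁ α₂ c l).filter (fun p => p.2 = true)).map Prod.fst = Rm α₁ α₂ c true l from rfl,
      show ((Tm α₁ α₂ c l).filter (fun p => p.2 = false)).map Prod.fst = Rm α₁ α₂ c false l from rfl,
      show ((Tm α₁ α₂ c' l').filter (fun p => p.2 = true)).map Prod.fst = Rm α₁ α₂ c' true l' from rfl,
      show ((Tm α₁ α₂ c' l').filter (fun p => p.2 = false)).map Prod.fst = Rm α₁ α₂ c' false l' from rfl,
      h1, h2]
lemma inj_of_not_cycred (l : List Bool) (hMl : wsum α₁ α₂ l = 0)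
    (hi : ¬ CycRed α₁ α₂ l) :
    ∀ a b : ℕ, a < l.length → b < l.length →
      wsum α₁ α₂ (l.take (a+1)) = wsum α₁ α₂ (l.take (b+1)) → a = b := by
  have key : ∀ a b : ℕ, a < b → b < l.length →
      wsum α₁ α₂ (l.take (a+1)) = wsum α₁ α₂ (l.take (b+1)) → False := by
    intro a b hab hbl heq
    apply hi
    set A := (l.rotate (a+1)).take (b-a) with hA
    set B := (l.rotate (a+1)).drop (b-a) with hB
    have hrotlen : (l.rotate (a+1)).length = l.length := List.length_rotate l (a+1)
    have hAeq : A = (l.take (b+1)).drop (a+1) := by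
      rw [hA, List.rotate_eq_drop_append_take (by omega : a+1 ≤ l.length)]
      rw [List.take_append]
      have h1 : b - a - (l.drop (a+1)).length = 0 := by
        rw [List.length_drop]; omega
      rw [h1, List.take_zero, List.append_nil, List.take_drop]
      have h2 : a + 1 + (b - a) = b + 1 := by omega
      rw [h2]
    have hsplit : l.take (b+1) = l.take (a+1) ++ A := by
      rw [hAeq]
      have h3 := List.take_append_drop (a+1) (l.take (b+1))
      rw [List.take_take] at h3
      have h4 : min (a+1) (b+1) = a + 1 := by omega
      rw [h4] at h3
      exact h3.symm
    have hlenA : A.length = b - a := by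
      rw [hA, List.length_take, hrotlen]; omega
    have hlenB : B.length = l.length - (b - a) := by
      rw [hB, List.length_drop, hrotlen]
    have hwA : wsum α₁ α₂ A = 0 := by
      have := heq
      rw [hsplit, wsum_append α₁ α₂] at this
      linear_combination -this
    have hwB : wsum α₁ α₂ B = 0 := by
      have hAB : A ++ B = l.rotate (a+1) := List.take_append_drop _ _
      have := wsum_rotate α₁ α₂ l (a+1)
      rw [← hAB, wsum_append α₁ α₂, hwA, hMl] at this
      linear_combination this
    refine ⟨a+1, A, B, ?_, ?_, hwA, hwB, (List.take_append_drop _ _).symm⟩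
    · intro h; rw [h] at hlenA; simp at hlenA; omega
    · intro h; rw [h] at hlenB; simp at hlenB; omega
  intro a b ha hb heq
  rcases lt_trichotomy a b with h|h|h
  · exact absurd heq (fun h' => key a b h hb h')
  · exact h
  · exact absurd heq.symm (fun h' => key b a h ha h')

lemma cyc_step (l : List Bool) (n : ℕ) (hn : l.length = n+1)
    (hMl : wsum α₁ α₂ l = 0) (c : ℂ) (t : Fin (n+1)) :
    c + wsum α₁ α₂ (l.take ((t+1).val + 1)) =
      (c + wsum α₁ α₂ (l.take (t.val+1))) + al α₁ α₂ (l.getD (t+1).val false) := by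
  by_cases ht : t.val = n
  · have hlast : t = Fin.last n := Fin.ext ht
    have h0 : (t+1).val = 0 := by rw [hlast, Fin.last_add_one]; rfl
    rw [h0]
    have htake : l.take (t.val+1) = l := by
      rw [ht, ← hn]; exact List.take_length
    rw [htake, hMl]
    have h1 := wsum_take_succ α₁ α₂ l 0 (by omega)
    rw [zero_add] at h1
    rw [h1]
    simp [wsum_nil]
  · have h0 : (t+1).val = t.val + 1 :=
      Fin.val_add_one_of_lt (by rw [Fin.lt_def, Fin.val_last]; omega)
    rw [h0, wsum_take_succ α₁ α₂ l (t.val+1) (by omega)]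
    ring

end Stmt16Aux

open Stmt16Aux Fin.NatCast in
theorem stmt16 (α₁ α₂ : ℂ) (hα₁ : α₁ ≠ 0) (hα₂ : α₂ ≠ 0)
    (N : ℕ) (l l' : List Bool)
    (hl : l ≠ []) (hl' : l' ≠ [])
    (hMl : wsum α₁ α₂ l = 0) (hMl' : wsum α₁ α₂ l' = 0)
    (hi : ¬ CycRed α₁ α₂ l) (hi' : ¬ CycRed α₁ α₂ l')
    (hN : l.length = N) (hN' : l'.length = N)
    (lam mu : ℂ) :
    ((Pfun α₁ α₂ false l).comp (X - C lam) = (Pfun α₁ α₂ false l').comp (X - C mu) ∧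
     (Pfun α₁ α₂ true l).comp (X - C lam) = (Pfun α₁ α₂ true l').comp (X - C mu)) ↔
    ∃ k : ℕ, k < N ∧ l' = l.rotate k ∧ mu = lam + wsum α₁ α₂ (l.take k) := by
  subst hN
  constructor
  · rintro ⟨h1, h2⟩
    have r1 : Rm α₁ α₂ lam true l = Rm α₁ α₂ mu true l' := by
      apply multiset_of_prod_eq
      have e1 := Pfun_comp α₁ α₂ false l lam
      have e2 := Pfun_comp α₁ α₂ false l' mu
      simp only [Bool.not_false] at e1 e2
      rw [← e1, ← e2]; exact h1
    have r2 : Rm α₁ α₂ lam false l = Rm α₁ α₂ mu false l' := by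
      apply multiset_of_prod_eq
      have e1 := Pfun_comp α₁ α₂ true l lam
      have e2 := Pfun_comp α₁ α₂ true l' mu
      simp only [Bool.not_true] at e1 e2
      rw [← e1, ← e2]; exact h2
    have hT : Tm α₁ α₂ lam l = Tm α₁ α₂ mu l' := Tm_eq_of_Rm α₁ α₂ _ _ _ _ r1 r2
    obtain ⟨n, hn⟩ : ∃ n, l.length = n + 1 := by
      have := List.length_pos_iff.mpr hl; exact ⟨l.length - 1, by omega⟩
    have hinj : ∀ s t : Fin (n+1),
        lam + wsum α₁ α₂ (l.take (s.val+1)) = lam + wsum α₁ α₂ (l.take (t.val+1)) → s = t := by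
      intro s t h
      have hs : s.val < l.length := by rw [hn]; exact s.isLt
      have ht : t.val < l.length := by rw [hn]; exact t.isLt
      exact Fin.ext (inj_of_not_cycred α₁ α₂ l hMl hi s.val t.val hs ht (by linear_combination h))
    have hmem : ∀ r : Fin (n+1), ∃ s : Fin (n+1),
        lam + wsum α₁ α₂ (l.take (s.val+1)) = mu + wsum α₁ α₂ (l'.take (r.val+1)) ∧
        l.getD s.val false = l'.getD r.val false := by
      intro r
      have hrlen : r.val < l'.length := by rw [hN', hn]; exact r.isLt
      have hr : (mu + wsum α₁ α₂ (l'.take (r.val+1)), l'.getD r.val false) ∈ Tm α₁ α₂ mu l' := by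
        rw [Tm, Multiset.mem_coe, Tl_eq_map]
        exact List.mem_map.mpr ⟨r.val, List.mem_range.mpr hrlen, rfl⟩
      rw [← hT, Tm, Multiset.mem_coe, Tl_eq_map] at hr
      obtain ⟨k, hk, hfk⟩ := List.mem_map.mp hr
      rw [List.mem_range, hn] at hk
      obtain ⟨hv, he⟩ := Prod.mk.injEq .. ▸ hfk
      exact ⟨⟨k, hk⟩, hv, he⟩
    choose φ hφv hφe using hmem
    have hstep : ∀ r : Fin (n+1), φ (r+1) = φ r + 1 := by
      intro r
      have E := cyc_step α₁ α₂ l n hn hMl lam (φ (r+1) - 1)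
      rw [sub_add_cancel] at E
      have A := hφv (r+1)
      have B := cyc_step α₁ α₂ l' n (by rw [hN', hn]) hMl' mu r
      have D := hφv r
      have hal : al α₁ α₂ (l.getD (φ (r+1)).val false)
          = al α₁ α₂ (l'.getD (r+1).val false) := by rw [hφe (r+1)]
      have key : lam + wsum α₁ α₂ (l.take ((φ (r+1) - 1).val + 1))
          = lam + wsum α₁ α₂ (l.take ((φ r).val + 1)) := by
        linear_combination A + B - D - E - hal
      have := hinj _ _ key
      exact sub_eq_iff_eq_add.mp this
    have hlin : ∀ m : ℕ, φ ((m : Fin (n+1))) = φ 0 + (m : Fin (n+1)) := by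
      intro m
      induction m with
      | zero => simp
      | succ m ih =>
          have hc : ((m+1 : ℕ) : Fin (n+1)) = (m : Fin (n+1)) + 1 := by push_cast; ring
          rw [hc, hstep, ih, add_assoc]
    have hall : ∀ r : Fin (n+1), φ r = φ 0 + r := by
      intro r
      conv_lhs => rw [← Fin.cast_val_eq_self r]
      rw [hlin, Fin.cast_val_eq_self]
    refine ⟨(φ 0).val, by rw [hn]; exact (φ 0).isLt, ?_, ?_⟩
    · apply List.ext_getElem
      · rw [List.length_rotate, hN']
      · intro i hi1 hi2
        have hifin : i < n + 1 := by rw [hN', hn] at hi1; exact hi1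
        have he := hφe ⟨i, hifin⟩
        rw [hall ⟨i, hifin⟩] at he
        have hval : (φ 0 + (⟨i, hifin⟩ : Fin (n+1))).val = ((φ 0).val + i) % (n+1) :=
          Fin.val_add _ _
        rw [List.getElem_rotate]
        have hmodlt : ((φ 0).val + i) % (n+1) < l.length := by
          rw [hn]; exact Nat.mod_lt _ (Nat.succ_pos n)
        rw [List.getD_eq_getElem l false (hval ▸ hmodlt), List.getD_eq_getElem l' false hi1] at he
        rw [← he]
        congr 1
        · rw [hval, hn, Nat.add_comm]
    · have h0 := hφv 0
      have e0 := hφe 0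
      have hl'len : 0 < l'.length := List.length_pos_iff.mpr hl'
      have s1 := wsum_take_succ α₁ α₂ l' 0 hl'len
      have s2 := wsum_take_succ α₁ α₂ l (φ 0).val (by rw [hn]; exact (φ 0).isLt)
      rw [show ((0 : Fin (n+1)).val) = 0 from rfl] at h0 e0
      rw [List.take_zero, wsum_nil, zero_add] at s1
      rw [zero_add] at h0
      have hal : al α₁ α₂ (l.getD (φ 0).val false) = al α₁ α₂ (l'.getD 0 false) := by rw [e0]
      linear_combination -h0 + s2 - s1 + hal
  · rintro ⟨k, hk, rfl, rfl⟩
    have hTm : Tm α₁ α₂ lam l = Tm α₁ α₂ (lam + wsum α₁ α₂ (l.take k)) (l.rotate k) := by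
      rw [Tm, Tm, Multiset.coe_eq_coe]
      rw [List.rotate_eq_drop_append_take (le_of_lt hk)]
      have hmu : lam + wsum α₁ α₂ (l.take k) + wsum α₁ α₂ (l.drop k) = lam := by
        have h := wsum_append α₁ α₂ (l.take k) (l.drop k)
        rw [List.take_append_drop, hMl] at h
        linear_combination -h
      rw [Tl_append, hmu]
      have hsplit : Tl α₁ α₂ lam l = Tl α₁ α₂ lam (l.take k)
          ++ Tl α₁ α₂ (lam + wsum α₁ α₂ (l.take k)) (l.drop k) := by
        conv_lhs => rw [← List.take_append_drop k l]
        rw [Tl_append]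
      rw [hsplit]
      exact List.perm_append_comm
    constructor
    · rw [Pfun_comp, Pfun_comp, Rm, Rm, hTm]
    · rw [Pfun_comp, Pfun_comp, Rm, Rm, hTm]
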